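/- Moreau decomposition for the sliding projection: let μ ≥ 0 and let τ ∈ E satisfy τ_t ≠ 0, ‖τ_t‖ ≥ μ * τ_n and μ * ‖τ_t‖ ≥ -τ_n, and set p = τ - ((‖τ_t‖ - μ * τ_n)/(1 + μ^2)) • ((1/‖τ_t‖) • τ_t - μ • n). Then p lies on the boundary of the Coulomb cone, i.e. ‖p_t‖ = μ * p_n; the residual q = τ - p satisfies μ * ‖q_t‖ ≤ -q_n (q lies in the polar cone of K_μ); and ⟪p, q⟫ = 0. -/

import Mathlib

open scoped InnerProductSpace

noncomputable section

/-- The ambient space `E = ℝ³`. -/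
abbrev E := EuclideanSpace ℝ (Fin 3)

/-- Normal component of `x` relative to the unit normal `n`. -/
def xn (n x : E) : ℝ := ⟪x, n⟫_ℝ

/-- Tangential component of `x` relative to the unit normal `n`. -/
def xt (n x : E) : E := x - (⟪x, n⟫_ℝ) • n

/-- The Coulomb cone with friction coefficient `μ`. -/
def Kcone (n : E) (μ : ℝ) : Set E := {r | ‖xt n r‖ ≤ μ * xn n r}

/-- Moreau decomposition for the sliding projection: the projected point `p` lies
on the boundary of the Coulomb cone, the residual `q = τ - p` lies in the polar
cone, and `p ⊥ q`. -/
theorem coulomb_moreau_decomposition_sliding (n : E) (hn : ‖n‖ = 1) (μ : ℝ) (hμ : 0 ≤ μ)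
    (τ : E) (hτt : xt n τ ≠ 0)
    (h1 : μ * xn n τ ≤ ‖xt n τ‖) (h2 : -(xn n τ) ≤ μ * ‖xt n τ‖)
    (p q : E)
    (hp : p = τ - ((‖xt n τ‖ - μ * xn n τ) / (1 + μ ^ 2)) • ((1 / ‖xt n τ‖) • xt n τ - μ • n))
    (hq : q = τ - p) :
    ‖xt n p‖ = μ * xn n p ∧ μ * ‖xt n q‖ ≤ -(xn n q) ∧ ⟪p, q⟫_ℝ = 0 := by
  set a := ‖xt n τ‖ with ha_def
  set b := xn n τ with hb_def
  set t := xt n τ with ht_def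
  have ha : 0 < a := norm_pos_iff.mpr hτt
  have hnn : ⟪n, n⟫_ℝ = 1 := by
    rw [real_inner_self_eq_norm_sq, hn]; norm_num
  have htn : ⟪t, n⟫_ℝ = 0 := by
    show ⟪τ - (⟪τ, n⟫_ℝ) • n, n⟫_ℝ = 0
    rw [inner_sub_left, inner_smul_left, hnn]
    simp
  have hnt : ⟪n, t⟫_ℝ = 0 := by rw [real_inner_comm]; exact htn
  have htt : ⟪t, t⟫_ℝ = a ^ 2 := by
    rw [real_inner_self_eq_norm_sq]
  have hτeq : τ = t + b • n := by
    show τ = (τ - (⟪τ, n⟫_ℝ) • n) + (⟪τ, n⟫_ℝ) • n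
    abel
  set c := (a - μ * b) / (1 + μ ^ 2) with hc_def
  have hden : (0:ℝ) < 1 + μ ^ 2 := by positivity
  have hc0 : 0 ≤ c := div_nonneg (by linarith) hden.le
  have hq' : q = ((c / a) • t : E) + (-(c * μ)) • n := by
    rw [hq, hp, sub_sub_cancel, smul_sub, smul_smul, smul_smul, mul_one_div, neg_smul,
      ← sub_eq_add_neg]
  have hqn : xn n q = -(c * μ) := by
    show ⟪q, n⟫_ℝ = -(c * μ)
    rw [hq', inner_add_left, inner_smul_left, inner_smul_left, htn, hnn]
    simp
  have hqt : xt n q = (c / a) • t := by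
    show q - (⟪q, n⟫_ℝ) • n = (c / a) • t
    rw [show ⟪q, n⟫_ℝ = -(c * μ) from hqn, hq']
    abel
  have hqtnorm : ‖xt n q‖ = c := by
    rw [hqt, norm_smul, Real.norm_eq_abs, abs_of_nonneg (div_nonneg hc0 ha.le), ← ha_def]
    field_simp
  have hpq : p = τ - q := by rw [hq]; abel
  have hpn : xn n p = b + c * μ := by
    show ⟪p, n⟫_ℝ = b + c * μ
    rw [hpq, inner_sub_left, show ⟪q, n⟫_ℝ = -(c * μ) from hqn]
    show b - -(c * μ) = b + c * μ
    ring
  have hpt : xt n p = ((a - c) / a) • t := by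
    show p - (⟪p, n⟫_ℝ) • n = ((a - c) / a) • t
    rw [show ⟪p, n⟫_ℝ = b + c * μ from hpn, hpq, hq', hτeq]
    rw [show ((a - c) / a) = 1 - c / a by field_simp]
    module
  have hac : a - c = μ * (a * μ + b) / (1 + μ ^ 2) := by
    rw [hc_def]; field_simp; ring
  have hac0 : 0 ≤ a - c := by
    rw [hac]
    apply div_nonneg _ hden.le
    have : 0 ≤ a * μ + b := by nlinarith
    positivity
  refine ⟨?_, ?_, ?_⟩
  · rw [hpt, hpn, norm_smul, Real.norm_eq_abs, abs_of_nonneg (div_nonneg hac0 ha.le), ← ha_def]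
    rw [div_mul_cancel₀ _ ha.ne', hac, hc_def]
    field_simp
    ring
  · rw [hqtnorm, hqn, neg_neg]
    linarith [mul_comm μ c]
  · rw [hpq, hq', hτeq]
    simp only [inner_sub_left, inner_add_left, inner_add_right, real_inner_smul_left, inner_smul_right,
      htn, hnt, hnn, htt]
    rw [hc_def]
    field_simp
    ring
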